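/- arXiv:2005.06261 — 2 statements merged into one kernel-verified Lean document; each statement's English description precedes it below -/
import Mathlib

section
/- In any reachable configuration of the SCDS transition system compiled from a social contract SC, the message store contains exactly the addressed messages (v, u(a)) such that the act u(a) appears in the diagonal history of u but not yet in the history of v, for all u ≠ v: that is, the message store equals the difference between each agent's authoritative diagonal and the other agents' views. -/
/-- A compiled-SCDS configuration: each agent's state is its history (a list of acts
`(author, action)`), and the store keeps, per ordered pair `(sender, recipient)`,
the FIFO queue of in-flight acts. -/
structure CConfig (V A : Type*) where
  hist : V → List (V × A)
  queue : V → V → List (V × A)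

variable {V A : Type*}

/-- `h` restricted to acts authored by `u`. -/
def restrictH [DecidableEq V] (h : List (V × A)) (u : V) : List (V × A) :=
  h.filter (fun m => m.1 = u)

/-- A step of the compiled SCDS; `P v h a` is the (output-closed) enabling condition
for agent `v` with history `h` to output act `v(a)`. -/
def CStep [DecidableEq V] (P : V → List (V × A) → A → Prop)
    (c c' : CConfig V A) : Prop :=
  -- output v-transition: append v(a) to s_v and send (w, v(a)) to every w ≠ v
  (∃ (v : V) (a : A), P v (c.hist v) a ∧
    c'.hist = Function.update c.hist v (c.hist v ++ [(v, a)]) ∧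
    c'.queue = fun x y => if x = v ∧ y ≠ v then c.queue x y ++ [(v, a)] else c.queue x y) ∨
  -- input v-transition: consume the oldest in-flight message from u to v
  (∃ (u v : V) (m : V × A) (rest : List (V × A)), u ≠ v ∧
    c.queue u v = m :: rest ∧
    c'.hist = Function.update c.hist v (c.hist v ++ [m]) ∧
    c'.queue = fun x y => if x = u ∧ y = v then rest else c.queue x y)

/-- Reachability from the initial configuration (all histories empty, empty store). -/
def CReachable [DecidableEq V] (P : V → List (V × A) → A → Prop)
    (c : CConfig V A) : Prop :=
  Relation.ReflTransGen (CStep P) ⟨fun _ => [], fun _ _ => []⟩ c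

section Aux
variable [DecidableEq V]

def CInv (c : CConfig V A) : Prop :=
  ∀ u v : V, u ≠ v →
    (restrictH (c.hist v) u <+: restrictH (c.hist u) u) ∧
    c.queue u v = (restrictH (c.hist u) u).drop (restrictH (c.hist v) u).length

lemma restrictH_append (h : List (V × A)) (x : V × A) (u : V) :
    restrictH (h ++ [x]) u =
      if x.1 = u then restrictH h u ++ [x] else restrictH h u := by
  simp only [restrictH, List.filter_append]
  by_cases hx : x.1 = u <;> simp [hx]

lemma CInv_step (P : V → List (V × A) → A → Prop) {c c' : CConfig V A}
    (hI : CInv c) (hs : CStep P c c') : CInv c' := by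
  rcases hs with ⟨v, a, _, hh, hq⟩ | ⟨u, v, m, rest, huv, hqv, hh, hq⟩
  · -- output step
    intro p q hpq
    have hque := (hI p q hpq).2
    obtain ⟨t, ht⟩ := (hI p q hpq).1
    rw [hh, hq]; dsimp only
    by_cases hpv : p = v
    · rw [← hpv]
      have hqp : q ≠ p := fun h => hpq h.symm
      rw [Function.update_self, Function.update_of_ne hqp, restrictH_append,
        if_pos rfl, if_pos ⟨rfl, hqp⟩]
      refine ⟨⟨t ++ [(p, a)], by rw [← List.append_assoc, ht]⟩, ?_⟩
      rw [hque, ← ht, List.append_assoc, List.drop_left, List.drop_left]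
    · rw [Function.update_of_ne hpv, if_neg (fun h => hpv h.1)]
      by_cases hqv2 : q = v
      · rw [← hqv2]
        rw [Function.update_self, restrictH_append, if_neg (fun h => hpq h.symm)]
        exact ⟨⟨t, ht⟩, hque⟩
      · rw [Function.update_of_ne hqv2]
        exact ⟨⟨t, ht⟩, hque⟩
  · -- input step
    have hm1 : m.1 = u := by
      have hque := (hI u v huv).2
      have hmem : m ∈ restrictH (c.hist u) u := by
        apply List.mem_of_mem_drop (i := (restrictH (c.hist v) u).length)
        rw [← hque, hqv]; exact List.mem_cons_self
      have := List.of_mem_filter hmem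
      simpa using this
    intro p q hpq
    have hque := (hI p q hpq).2
    obtain ⟨t, ht⟩ := (hI p q hpq).1
    rw [hh, hq]; dsimp only
    by_cases hqv2 : q = v
    · rw [← hqv2] at hqv huv ⊢
      rw [Function.update_self, Function.update_of_ne hpq, restrictH_append]
      by_cases hpu : p = u
      · rw [← hpu] at hqv hm1 huv
        rw [if_pos hm1, if_pos ⟨hpu, rfl⟩]
        have htr : t = m :: rest := by
          rw [hque, ← ht, List.drop_left] at hqv; exact hqv
        subst htr
        refine ⟨⟨rest, by rw [List.append_assoc]; simpa using ht⟩, ?_⟩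
        rw [← ht, show restrictH (c.hist q) p ++ m :: rest
              = (restrictH (c.hist q) p ++ [m]) ++ rest by simp, List.drop_left]
      · rw [if_neg (fun h => hpu (h.symm.trans hm1)), if_neg (fun h => hpu h.1)]
        exact ⟨⟨t, ht⟩, hque⟩
    · rw [Function.update_of_ne hqv2, if_neg (fun h => hqv2 h.2)]
      by_cases hpv : p = v
      · rw [← hpv] at huv ⊢
        rw [Function.update_self, restrictH_append,
          if_neg (fun h => huv (hm1.symm.trans h))]
        exact ⟨⟨t, ht⟩, hque⟩
      · rw [Function.update_of_ne hpv]
        exact ⟨⟨t, ht⟩, hque⟩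

end Aux

/-- State determines message store: in every reachable configuration, the in-flight
messages from `u` addressed to `v` are exactly the acts in `u`'s diagonal `s_u[u]`
beyond the prefix `s_v[u]` already seen by `v`. -/
theorem store_is_diagonal_difference [DecidableEq V]
    (P : V → List (V × A) → A → Prop) (c : CConfig V A)
    (hc : CReachable P c) :
    ∀ u v : V, u ≠ v →
      c.queue u v =
        (restrictH (c.hist u) u).drop (restrictH (c.hist v) u).length := by
  have hInv : CInv c := by
    induction hc with
    | refl => intro u v h; exact ⟨List.nil_prefix, rfl⟩
    | tail _ hstep ih => exact CInv_step P ih hstep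
  intro u v h
  exact (hInv u v h).2
end

section
/- In every reachable configuration of the compiled SCDS, for each pair of agents u ≠ v, the history s_v[u] (acts of u as seen by v) is a prefix of s_u[u] (u's own acts), and the messages in the store addressed to v authored by u are exactly the acts in s_u[u] not in s_v[u], in order. -/
variable {V A : Type*}

lemma restrictH_append_self [DecidableEq V] (h : List (V × A)) (m : V × A) :
    restrictH (h ++ [m]) m.1 = restrictH h m.1 ++ [m] := by
  simp [restrictH, List.filter_append]

lemma restrictH_append_ne [DecidableEq V] (h : List (V × A)) (m : V × A) {u : V} (hm : m.1 ≠ u) :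
    restrictH (h ++ [m]) u = restrictH h u := by
  simp [restrictH, List.filter_append, hm]

/-- Invariant: for all `u ≠ v`, the acts of `u` seen by `v` form a prefix of `u`'s own
acts, and the in-flight queue from `u` to `v` is exactly the remaining suffix, in order. -/
theorem prefix_and_queue_invariant [DecidableEq V]
    (P : V → List (V × A) → A → Prop) (c : CConfig V A)
    (hc : CReachable P c) :
    ∀ u v : V, u ≠ v →
      restrictH (c.hist v) u <+: restrictH (c.hist u) u ∧
      c.queue u v =
        (restrictH (c.hist u) u).drop (restrictH (c.hist v) u).length := by
  induction hc with
  | refl => intro u v _; simp [restrictH]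
  | @tail b d _ hstep ih =>
    intro u w huw
    obtain ⟨hpre, hq⟩ := ih u w huw
    rcases hstep with ⟨v, a, _, hh, hqq⟩ | ⟨u₀, v₀, m, rest, hne, hcons, hh, hqq⟩
    · -- output step at v
      rw [hh, hqq]
      simp only [Function.update_apply]
      by_cases hu : u = v
      · -- u = v, so w ≠ v : u's own history grows
        subst hu
        rw [if_pos rfl, if_neg (fun h : w = u => huw h.symm)]
        have hself : restrictH (b.hist u ++ [(u, a)]) u = restrictH (b.hist u) u ++ [(u, a)] :=
          restrictH_append_self (b.hist u) (u, a)
        rw [hself, if_pos ⟨rfl, fun h : w = u => huw h.symm⟩]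
        constructor
        · exact hpre.trans (List.prefix_append _ _)
        · rw [hq, List.drop_append,
            Nat.sub_eq_zero_of_le hpre.length_le, List.drop_zero]
      · by_cases hw : w = v
        · subst hw
          rw [if_pos rfl, if_neg hu,
            restrictH_append_ne _ _ (fun h : w = u => hu h.symm),
            if_neg (by rintro ⟨h1, _⟩; exact hu h1)]
          exact ⟨hpre, hq⟩
        · rw [if_neg hu, if_neg hw,
            if_neg (by rintro ⟨h1, _⟩; exact hu h1)]
          exact ⟨hpre, hq⟩
    · -- input step: v₀ receives m from u₀
      rw [hh, hqq]
      simp only [Function.update_apply]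
      have hm1 : m.1 = u₀ := by
        have hmem : m ∈ restrictH (b.hist u₀) u₀ := by
          have h3 : m ∈ b.queue u₀ v₀ := by rw [hcons]; exact List.mem_cons_self
          rw [(ih u₀ v₀ hne).2] at h3
          exact List.drop_subset _ _ h3
        simpa [restrictH, List.mem_filter] using (List.mem_filter.mp hmem).2
      by_cases hw : w = v₀
      · subst hw
        rw [if_pos rfl, if_neg (fun h : u = w => huw h)]
        by_cases hu : u = u₀
        · subst hu
          have hold := restrictH_append_self (b.hist w) m
          rw [hm1] at hold
          rw [hold, if_pos ⟨rfl, rfl⟩]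
          -- full = P ++ m :: rest
          have htake : restrictH (b.hist w) u = (restrictH (b.hist u) u).take
              (restrictH (b.hist w) u).length := List.prefix_iff_eq_take.mp hpre
          have hfull : restrictH (b.hist u) u =
              restrictH (b.hist w) u ++ m :: rest := by
            conv_lhs => rw [← List.take_append_drop (restrictH (b.hist w) u).length
              (restrictH (b.hist u) u)]
            rw [← hq, hcons, ← htake]
          constructor
          · rw [hfull]
            exact ⟨rest, by simp⟩
          · rw [hfull, List.length_append, List.length_singleton,
              List.drop_append,
              List.drop_eq_nil_of_le (by omega), List.nil_append]
            have : (restrictH (b.hist w) u).length + 1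
                - (restrictH (b.hist w) u).length = 1 := by omega
            rw [this, List.drop_one, List.tail_cons]
        · rw [restrictH_append_ne _ _ (hm1 ▸ fun h : u₀ = u => hu h.symm),
            if_neg (by rintro ⟨h1, _⟩; exact hu h1)]
          exact ⟨hpre, hq⟩
      · rw [if_neg hw]
        by_cases hu : u = v₀
        · subst hu
          rw [if_pos rfl, restrictH_append_ne _ _ (hm1 ▸ hne),
            if_neg (by rintro ⟨h1, _⟩; exact hne h1.symm)]
          exact ⟨hpre, hq⟩
        · rw [if_neg hu, if_neg (by rintro ⟨_, h2⟩; exact hw h2)]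
          exact ⟨hpre, hq⟩
end
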